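/- Let Σ be an alphabet and 𝕄 = (M,+,val,𝟘) a timed valuation monoid. Then every recognizable quantitative timed language over Σ and 𝕄 belongs to N^Seq(Σ,𝕄), i.e., Rec(Σ,𝕄) ⊆ N^Seq(Σ,𝕄). -/

import Mathlib

open scoped NNReal Classical

/-! # Core definitions: timed automata and weighted timed automata -/

/-- Comparison operators ⋈ ∈ {<, ≤, =, ≥, >}. -/
inductive Cmp : Type
  | lt | le | eq | ge | gt
  deriving DecidableEq

/-- Evaluation of a comparison `r ⋈ c` for `r ∈ ℝ≥0` and `c ∈ ℕ`. -/
def Cmp.eval : Cmp → ℝ≥0 → ℕ → Prop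
  | .lt, r, c => r < (c : ℝ≥0)
  | .le, r, c => r ≤ (c : ℝ≥0)
  | .eq, r, c => r = (c : ℝ≥0)
  | .ge, r, c => (c : ℝ≥0) ≤ r
  | .gt, r, c => (c : ℝ≥0) < r

/-- Clock constraints over a set `C` of clocks: `True` or conjunctions of `x ⋈ c`. -/
inductive ClockConstraint (C : Type) : Type
  | tt : ClockConstraint C
  | atom : C → Cmp → ℕ → ClockConstraint C
  | conj : ClockConstraint C → ClockConstraint C → ClockConstraint C

/-- A clock valuation assigns a non-negative real to each clock. -/
def ClockVal (C : Type) : Type := C → ℝ≥0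

/-- Satisfaction of clock constraints. -/
def ClockConstraint.Sat {C : Type} (ν : ClockVal C) : ClockConstraint C → Prop
  | .tt => True
  | .atom x op c => op.eval (ν x) c
  | .conj φ ψ => φ.Sat ν ∧ ψ.Sat ν

/-- `ν + t`: add `t` to every clock. -/
def ClockVal.add {C : Type} (ν : ClockVal C) (t : ℝ≥0) : ClockVal C := fun x => ν x + t

/-- `ν[Λ := 0]`: reset the clocks in `Λ` to `0`. -/
noncomputable def ClockVal.reset {C : Type} (ν : ClockVal C) (Λ : Set C) : ClockVal C :=
  fun x => if x ∈ Λ then 0 else ν x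

/-- The clock valuation assigning `0` to every clock. -/
def ClockVal.zero {C : Type} : ClockVal C := fun _ => 0

/-- An edge of a timed automaton: an element of `L × Σ × Φ(C) × 2^C × L`. -/
structure Edge (L A C : Type) : Type where
  src : L
  label : A
  guard : ClockConstraint C
  reset : Set C
  dst : L

/-- A timed automaton over the alphabet `A`. -/
structure TimedAutomaton (A : Type) : Type 1 where
  L : Type
  C : Type
  finL : Finite L
  finC : Finite C
  I : Set L
  F : Set L
  E : Set (Edge L A C)
  finE : E.Finite

/-- A (non-empty finite) timed word over `A`. -/
abbrev TimedWord (A : Type) : Type := { w : List (A × ℝ≥0) // w ≠ [] }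

/-- `T.IsRunFrom ℓ ν w es` holds iff `es` is the sequence of edges of a run of `T`
reading the timed word `w`, starting in location `ℓ` with clock valuation `ν`,
and ending in a final location. -/
def TimedAutomaton.IsRunFrom {A : Type} (T : TimedAutomaton A) :
    T.L → ClockVal T.C → List (A × ℝ≥0) → List (Edge T.L A T.C) → Prop
  | ℓ, _, [], [] => ℓ ∈ T.F
  | ℓ, ν, (a, t) :: w, e :: es =>
      e ∈ T.E ∧ e.src = ℓ ∧ e.label = a ∧ e.guard.Sat (ν.add t) ∧
      T.IsRunFrom e.dst ((ν.add t).reset e.reset) w es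
  | _, _, [], _ :: _ => False
  | _, _, _ :: _, [] => False

/-- `Run_T(w)`: the set of runs (identified with their edge sequences) of `T` on `w`. -/
def TimedAutomaton.RunOn {A : Type} (T : TimedAutomaton A) (w : TimedWord A) :
    Set (List (Edge T.L A T.C)) :=
  { es | ∃ ℓ₀ ∈ T.I, T.IsRunFrom ℓ₀ ClockVal.zero w.1 es }

/-- `L(T)`: the timed language accepted by `T`. -/
def TimedAutomaton.Lang {A : Type} (T : TimedAutomaton A) : Set (TimedWord A) :=
  { w | (T.RunOn w).Nonempty }

/-- A timed automaton is unambiguous if every timed word has at most one run. -/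
def TimedAutomaton.Unambiguous {A : Type} (T : TimedAutomaton A) : Prop :=
  ∀ w : TimedWord A, (T.RunOn w).Subsingleton

/-- A timed automaton is deterministic if it has a single initial location and the guards of
any two distinct edges with the same source and label are jointly unsatisfiable. -/
def TimedAutomaton.Deterministic {A : Type} (T : TimedAutomaton A) : Prop :=
  (∃ ℓ, T.I = {ℓ}) ∧
  ∀ e₁ ∈ T.E, ∀ e₂ ∈ T.E, e₁.src = e₂.src → e₁.label = e₂.label → e₁ ≠ e₂ →
    ∀ ν : ClockVal T.C, ¬ (e₁.guard.Sat ν ∧ e₂.guard.Sat ν)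

/-- A timed automaton is sequential if it has a single initial location and any two edges
with the same source and label are equal. -/
def TimedAutomaton.Sequential {A : Type} (T : TimedAutomaton A) : Prop :=
  (∃ ℓ, T.I = {ℓ}) ∧
  ∀ e₁ ∈ T.E, ∀ e₂ ∈ T.E, e₁.src = e₂.src → e₁.label = e₂.label → e₁ = e₂

/-- A timed language is recognizable by a timed automaton satisfying `P`. -/
def TLRecognizableBy {A : Type} (P : TimedAutomaton A → Prop) (𝓛 : Set (TimedWord A)) : Prop :=
  ∃ T : TimedAutomaton A, P T ∧ T.Lang = 𝓛

/-- A weighted timed automaton over the alphabet `A` and (the domain `M` of) a timed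
valuation monoid: a timed automaton together with weights on locations and edges.
The timed valuation monoid itself is given by an `AddCommMonoid M` instance together with a
timed valuation function `val : List ((M × M) × ℝ≥0) → M` (only its values on non-empty
lists, i.e. on `𝕋(M×M)⁺`, ever matter). -/
structure WTA (A M : Type) extends TimedAutomaton A where
  wtL : L → M
  wtE : Edge L A C → M

/-- The timed word `wt♯(ρ) ∈ 𝕋(M×M)⁺` associated with a run: the `i`-th letter is
`((wt(ℓ_{i-1}), wt(e_i)), t_i)`, where `ℓ_{i-1}` is the source location of edge `e_i`. -/
def WTA.runWord {A M : Type} (W : WTA A M) (w : List (A × ℝ≥0))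
    (es : List (Edge W.L A W.C)) : List ((M × M) × ℝ≥0) :=
  List.zipWith (fun (p : A × ℝ≥0) e => ((W.wtL e.src, W.wtE e), p.2)) w es

/-- The behavior `‖W‖ : 𝕋A⁺ → M` of a WTA: `‖W‖(w) = Σ (val(wt♯(ρ)) : ρ ∈ Run_W(w))`,
the empty sum being `0` (the monoid unit `𝟘`). -/
noncomputable def WTA.behavior {A M : Type} [AddCommMonoid M]
    (val : List ((M × M) × ℝ≥0) → M) (W : WTA A M) (w : TimedWord A) : M :=
  ∑ᶠ es ∈ W.toTimedAutomaton.RunOn w, val (W.runWord w.1 es)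

/-- A quantitative timed language `r : 𝕋A⁺ → M` is recognizable over the timed valuation
monoid `(M, +, val, 𝟘)` by a WTA whose underlying timed automaton satisfies `P`. -/
def QTLRecognizableBy {A M : Type} [AddCommMonoid M] (val : List ((M × M) × ℝ≥0) → M)
    (P : TimedAutomaton A → Prop) (r : TimedWord A → M) : Prop :=
  ∃ W : WTA A M, P W.toTimedAutomaton ∧ ∀ w, W.behavior val w = r w

/-- Recognizability (no restriction on the underlying timed automaton). -/
def QTLRecognizable {A M : Type} [AddCommMonoid M] (val : List ((M × M) × ℝ≥0) → M)
    (r : TimedWord A → M) : Prop :=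
  ∃ W : WTA A M, ∀ w, W.behavior val w = r w

/-- Renaming of timed words along `h : Γ → A`. -/
def mapTimedWord {Γ A : Type} (h : Γ → A) (v : TimedWord Γ) : TimedWord A :=
  ⟨v.1.map (fun p => (h p.1, p.2)), by
    cases v with
    | mk l hl => cases l with
      | nil => exact absurd rfl hl
      | cons p l => simp⟩

/-- `h(r)(w) = Σ (r(v) : v ∈ 𝕋Γ⁺, h(v) = w)` (a finite sum when `Γ` is finite). -/
noncomputable def pushQTL {Γ A M : Type} [AddCommMonoid M] (h : Γ → A)
    (r : TimedWord Γ → M) (w : TimedWord A) : M :=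
  ∑ᶠ v ∈ { v : TimedWord Γ | mapTimedWord h v = w }, r v

/-- `(val ∘ g)(w) = val((g(a₁),t₁)…(g(aₙ),tₙ))`. -/
def valComp {A M : Type} (val : List ((M × M) × ℝ≥0) → M) (g : A → M × M)
    (w : TimedWord A) : M :=
  val (w.1.map (fun p => (g p.1, p.2)))

/-- The intersection `r ∩ 𝓛` of a quantitative timed language with a timed language. -/
noncomputable def interQTL {A M : Type} [Zero M] (r : TimedWord A → M)
    (𝓛 : Set (TimedWord A)) (w : TimedWord A) : M :=
  if w ∈ 𝓛 then r w else 0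

/-- Membership in the Nivat class `N^P(A, 𝕄)`: `𝕃 = h((val ∘ g) ∩ 𝓛)` for some alphabet `Γ`,
maps `h : Γ → A`, `g : Γ → M × M` and a timed language `𝓛` recognizable by a timed
automaton satisfying `P`. -/
def NivatMem {A M : Type} [AddCommMonoid M] (val : List ((M × M) × ℝ≥0) → M)
    (P : ∀ {Γ : Type}, TimedAutomaton Γ → Prop) (𝕃 : TimedWord A → M) : Prop :=
  ∃ (Γ : Type) (_ : Finite Γ) (_ : Nonempty Γ) (h : Γ → A) (g : Γ → M × M)
    (𝓛 : Set (TimedWord Γ)),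
      TLRecognizableBy P 𝓛 ∧ ∀ w, 𝕃 w = pushQTL h (interQTL (valComp val g) 𝓛) w

/-- Membership in the class `H^P(A, 𝕄)`: `𝕃 = h(r)` for some alphabet `Γ`, `h : Γ → A`
and a quantitative timed language `r` recognizable by a WTA whose underlying timed
automaton satisfies `P`. -/
def HMem {A M : Type} [AddCommMonoid M] (val : List ((M × M) × ℝ≥0) → M)
    (P : ∀ {Γ : Type}, TimedAutomaton Γ → Prop) (𝕃 : TimedWord A → M) : Prop :=
  ∃ (Γ : Type) (_ : Finite Γ) (_ : Nonempty Γ) (h : Γ → A) (r : TimedWord Γ → M),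
      QTLRecognizableBy val (fun T => P T) r ∧ ∀ w, 𝕃 w = pushQTL h r w

/-- Idempotency of a timed valuation monoid. -/
def IsIdempotent (M : Type) [Add M] : Prop := ∀ m : M, m + m = m

/-- Location-independence of a timed valuation function: the value of `val` on a non-empty
timed word over `M × M` depends only on the second components and the time stamps. -/
def LocIndep {M : Type} (val : List ((M × M) × ℝ≥0) → M) : Prop :=
  ∀ l l' : List ((M × M) × ℝ≥0), l ≠ [] →
    l.map (fun p => (p.1.2, p.2)) = l'.map (fun p => (p.1.2, p.2)) → val l = val l'

section NivatAux

variable {S M : Type} [Finite S] [Nonempty S] [AddCommMonoid M]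

/-- The extended alphabet's projection to `S`. -/
noncomputable def nivH (W : WTA S M) : Option {e // e ∈ W.E} → S
  | none => Classical.arbitrary S
  | some e => e.1.label

/-- The weight map on the extended alphabet. -/
def nivG (W : WTA S M) : Option {e // e ∈ W.E} → M × M
  | none => (0, 0)
  | some e => (W.wtL e.1.src, W.wtE e.1)

/-- Initial edges of the sequential automaton. -/
def nivE1 (W : WTA S M) (e : {e // e ∈ W.E}) :
    Edge (Option W.L) (Option {e // e ∈ W.E}) W.C :=
  ⟨none, some e, e.1.guard, e.1.reset, some e.1.dst⟩

/-- Non-initial edges of the sequential automaton. -/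
def nivE2 (W : WTA S M) (e : {e // e ∈ W.E}) :
    Edge (Option W.L) (Option {e // e ∈ W.E}) W.C :=
  ⟨some e.1.src, some e, e.1.guard, e.1.reset, some e.1.dst⟩

/-- The sequential timed automaton over the extended alphabet. -/
noncomputable def nivT (W : WTA S M) : TimedAutomaton (Option {e // e ∈ W.E}) where
  L := Option W.L
  C := W.C
  finL := by haveI := W.finL; haveI := Fintype.ofFinite W.L; exact inferInstance
  finC := W.finC
  I := {none}
  F := some '' W.F
  E := (nivE1 W '' {e | e.1.src ∈ W.I}) ∪ (nivE2 W '' Set.univ)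
  finE := by
    haveI := W.finE.to_subtype
    exact ((Set.toFinite _).image _).union ((Set.toFinite _).image _)

/-- Extracting the edge list from a timed word over the extended alphabet. -/
def nivExtr (W : WTA S M) (vl : List ((Option {e // e ∈ W.E}) × ℝ≥0)) :
    List (Edge W.L S W.C) :=
  vl.filterMap fun p => p.1.map Subtype.val

/-- Projecting a timed word over the extended alphabet to one over `S`. -/
noncomputable def nivProj (W : WTA S M) (vl : List ((Option {e // e ∈ W.E}) × ℝ≥0)) :
    List (S × ℝ≥0) :=
  vl.map fun p => (nivH W p.1, p.2)

lemma niv_seq (W : WTA S M) : (nivT W).Sequential := by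
  refine ⟨⟨none, rfl⟩, ?_⟩
  rintro e₁ h₁ e₂ h₂ hsrc hlab
  rcases h₁ with ⟨a, -, rfl⟩ | ⟨a, -, rfl⟩ <;> rcases h₂ with ⟨b, -, rfl⟩ | ⟨b, -, rfl⟩ <;>
    simp only [nivE1, nivE2] at hsrc hlab ⊢ <;>
    first
      | (cases hlab; rfl)
      | exact absurd hsrc (by simp)

lemma niv_run_forward (W : WTA S M) :
    ∀ (vl : List ((Option {e // e ∈ W.E}) × ℝ≥0))
      (es' : List (Edge (Option W.L) (Option {e // e ∈ W.E}) W.C))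
      (ℓ : W.L) (ν : ClockVal W.C),
      (nivT W).IsRunFrom (some ℓ) ν vl es' →
      W.toTimedAutomaton.IsRunFrom ℓ ν (nivProj W vl) (nivExtr W vl) ∧
        ∀ p ∈ vl, p.1 ≠ none := by
  intro vl
  induction vl with
  | nil =>
    intro es' ℓ ν h
    cases es' with
    | nil =>
      obtain ⟨ℓ', hℓ', hℓeq⟩ := h
      cases hℓeq
      exact ⟨hℓ', by simp⟩
    | cons e es => exact absurd h (by simp [TimedAutomaton.IsRunFrom])
  | cons p vl ih =>
    obtain ⟨γ, t⟩ := p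
    intro es' ℓ ν h
    cases es' with
    | nil => exact absurd h (by simp [TimedAutomaton.IsRunFrom])
    | cons e' es'' =>
      obtain ⟨hE, hsrc, hlab, hsat, hrest⟩ := h
      rcases hE with ⟨e, he, rfl⟩ | ⟨e, -, rfl⟩
      · have h0 : (none : Option W.L) = some ℓ := hsrc
        exact absurd h0 (by simp)
      · have hsrc2 : some e.1.src = some ℓ := hsrc
        have hsrc' : e.1.src = ℓ := Option.some.inj hsrc2
        have hlab' : γ = some e := by
          simpa [nivE2] using hlab.symm
        subst hlab'
        obtain ⟨hrun, hns⟩ := ih es'' e.1.dst ((ν.add t).reset e.1.reset) hrest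
        refine ⟨⟨e.2, hsrc', rfl, hsat, hrun⟩, ?_⟩
        intro q hq
        rcases List.mem_cons.mp hq with rfl | hq
        · simp
        · exact hns q hq

lemma niv_run_init (W : WTA S M) (vl : List ((Option {e // e ∈ W.E}) × ℝ≥0))
    (es' : List (Edge (Option W.L) (Option {e // e ∈ W.E}) W.C)) (ν : ClockVal W.C)
    (h : (nivT W).IsRunFrom none ν vl es') :
    (∃ ℓ₀ ∈ W.I, W.toTimedAutomaton.IsRunFrom ℓ₀ ν (nivProj W vl) (nivExtr W vl)) ∧
      ∀ p ∈ vl, p.1 ≠ none := by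
  cases vl with
  | nil =>
    cases es' with
    | nil =>
      obtain ⟨ℓ', -, hℓeq⟩ := h
      exact absurd hℓeq (by simp)
    | cons e es => exact absurd h (by simp [TimedAutomaton.IsRunFrom])
  | cons p vl =>
    obtain ⟨γ, t⟩ := p
    cases es' with
    | nil => exact absurd h (by simp [TimedAutomaton.IsRunFrom])
    | cons e' es'' =>
      obtain ⟨hE, hsrc, hlab, hsat, hrest⟩ := h
      rcases hE with ⟨e, he, rfl⟩ | ⟨e, -, rfl⟩
      · have hlab' : γ = some e := by
          simpa [nivE1] using hlab.symm
        subst hlab'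
        obtain ⟨hrun, hns⟩ := niv_run_forward W vl es'' e.1.dst ((ν.add t).reset e.1.reset) hrest
        refine ⟨⟨e.1.src, he, e.2, rfl, rfl, hsat, hrun⟩, ?_⟩
        intro q hq
        rcases List.mem_cons.mp hq with rfl | hq
        · simp
        · exact hns q hq
      · have h0 : some e.1.src = (none : Option W.L) := hsrc
        exact absurd h0 (by simp)

lemma niv_run_back (W : WTA S M) :
    ∀ (wl : List (S × ℝ≥0)) (es : List (Edge W.L S W.C)) (ℓ : W.L) (ν : ClockVal W.C),
      W.toTimedAutomaton.IsRunFrom ℓ ν wl es →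
      ∃ (vl : List ((Option {e // e ∈ W.E}) × ℝ≥0))
        (es' : List (Edge (Option W.L) (Option {e // e ∈ W.E}) W.C)),
        (nivT W).IsRunFrom (some ℓ) ν vl es' ∧ nivProj W vl = wl ∧ nivExtr W vl = es := by
  intro wl
  induction wl with
  | nil =>
    intro es ℓ ν h
    cases es with
    | nil =>
      refine ⟨[], [], ⟨ℓ, h, rfl⟩, rfl, rfl⟩
    | cons e es => exact absurd h (by simp [TimedAutomaton.IsRunFrom])
  | cons p wl ih =>
    obtain ⟨a, t⟩ := p
    intro es ℓ ν h
    cases es with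
    | nil => exact absurd h (by simp [TimedAutomaton.IsRunFrom])
    | cons e es2 =>
      obtain ⟨hE, hsrc, hlab, hsat, hrest⟩ := h
      obtain ⟨vl2, es2', h2, hp2, hx2⟩ := ih es2 e.dst ((ν.add t).reset e.reset) hrest
      refine ⟨(some ⟨e, hE⟩, t) :: vl2, nivE2 W ⟨e, hE⟩ :: es2', ?_, ?_, ?_⟩
      · refine ⟨Or.inr ⟨⟨e, hE⟩, Set.mem_univ _, rfl⟩, ?_, rfl, hsat, h2⟩
        show some e.src = some ℓ; rw [hsrc]
      · simp [nivProj, nivH, hlab] at hp2 ⊢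
        exact hp2
      · simp [nivExtr] at hx2 ⊢
        exact hx2

lemma niv_inj (W : WTA S M) :
    ∀ (vl vl' : List ((Option {e // e ∈ W.E}) × ℝ≥0)),
      (∀ p ∈ vl, p.1 ≠ none) → (∀ p ∈ vl', p.1 ≠ none) →
      nivProj W vl = nivProj W vl' → nivExtr W vl = nivExtr W vl' → vl = vl' := by
  intro vl
  induction vl with
  | nil =>
    intro vl' _ _ hp _
    cases vl' with
    | nil => rfl
    | cons q vl' => exact absurd hp (by simp [nivProj])
  | cons p vl ih =>
    intro vl' hn hn' hp hx
    cases vl' with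
    | nil => exact absurd hp (by simp [nivProj])
    | cons q vl' =>
      obtain ⟨γ, t⟩ := p
      obtain ⟨γ', t'⟩ := q
      obtain ⟨e, rfl⟩ := Option.ne_none_iff_exists'.mp (hn (γ, t) (by simp))
      obtain ⟨e', rfl⟩ := Option.ne_none_iff_exists'.mp (hn' (γ', t') (by simp))
      simp only [nivExtr, List.filterMap_cons, Option.map_some, List.cons.injEq] at hx
      simp only [nivProj, List.map_cons, List.cons.injEq, Prod.mk.injEq] at hp
      have he : e = e' := Subtype.ext hx.1
      subst he
      have ht : t = t' := hp.1.2
      subst ht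
      have := ih vl' (fun r hr => hn r (by simp [hr])) (fun r hr => hn' r (by simp [hr]))
        (by simpa [nivProj] using hp.2) (by simpa [nivExtr] using hx.2)
      rw [this]

lemma niv_val (W : WTA S M) :
    ∀ (vl : List ((Option {e // e ∈ W.E}) × ℝ≥0)), (∀ p ∈ vl, p.1 ≠ none) →
      List.zipWith (fun (p : S × ℝ≥0) (e : Edge W.L S W.C) => ((W.wtL e.src, W.wtE e), p.2))
        (nivProj W vl) (nivExtr W vl) = vl.map fun p => (nivG W p.1, p.2) := by
  intro vl
  induction vl with
  | nil => intro _; rfl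
  | cons p vl ih =>
    intro hn
    obtain ⟨γ, t⟩ := p
    obtain ⟨e, rfl⟩ := Option.ne_none_iff_exists'.mp (hn (γ, t) (by simp))
    simp only [nivProj, nivExtr, List.map_cons, List.filterMap_cons, Option.map_some,
      List.zipWith_cons_cons, nivG]
    exact congrArg _ (by simpa [nivProj, nivExtr, nivG] using ih (fun r hr => hn r (by simp [hr])))

end NivatAux

/-- Lemma: `Rec(Σ,𝕄) ⊆ N^Seq(Σ,𝕄)`. Every recognizable quantitative
timed language over `Σ` and a timed valuation monoid `𝕄` can be written as
`h((val ∘ g) ∩ 𝓛)` with `𝓛` sequentially recognizable. -/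
theorem recognizable_subset_nivat_seq {S M : Type} [Finite S] [Nonempty S]
    [AddCommMonoid M] (val : List ((M × M) × ℝ≥0) → M)
    (r : TimedWord S → M) (hr : QTLRecognizable val r) :
    NivatMem val (fun {_} T => T.Sequential) r := by
  obtain ⟨W, hW⟩ := hr
  haveI : Finite {e // e ∈ W.E} := W.finE.to_subtype
  haveI := Fintype.ofFinite {e // e ∈ W.E}
  refine ⟨Option {e // e ∈ W.E}, inferInstance, ⟨none⟩, nivH W, nivG W, (nivT W).Lang,
    ⟨nivT W, niv_seq W, rfl⟩, ?_⟩
  intro w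
  rw [← hW w]
  unfold WTA.behavior pushQTL
  set A : Set (TimedWord (Option {e // e ∈ W.E})) :=
    { v | mapTimedWord (nivH W) v = w } with hA
  have hstep1 : ∑ᶠ v ∈ A, interQTL (valComp val (nivG W)) (nivT W).Lang v
      = ∑ᶠ v ∈ A ∩ (nivT W).Lang, valComp val (nivG W) v := by
    have h1 : ∀ v ∈ A, interQTL (valComp val (nivG W)) (nivT W).Lang v
        = Set.indicator ((nivT W).Lang) (valComp val (nivG W)) v := by
      intro v _; rw [interQTL, Set.indicator_apply]
    rw [finsum_mem_congr rfl h1, finsum_mem_def, Set.indicator_indicator, ← finsum_mem_def]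
  rw [hstep1]
  -- bijection between words in `A ∩ Lang` and runs of `W` on `w`
  have hmem : ∀ v : TimedWord (Option {e // e ∈ W.E}), v ∈ A ↔ nivProj W v.1 = w.1 := by
    intro v
    constructor
    · intro hv; exact congrArg Subtype.val hv
    · intro hv; exact Subtype.ext hv
  have hbij : Set.BijOn (fun v : TimedWord (Option {e // e ∈ W.E}) => nivExtr W v.1)
      (A ∩ (nivT W).Lang) (W.toTimedAutomaton.RunOn w) := by
    refine ⟨?_, ?_, ?_⟩
    · rintro v ⟨hvA, hvL⟩
      obtain ⟨es', ℓ₀, hℓ₀, hrun⟩ := hvL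
      have hℓ₀' : ℓ₀ = none := hℓ₀
      subst hℓ₀'
      obtain ⟨⟨ℓ₁, hℓ₁, hrun'⟩, -⟩ := niv_run_init W v.1 es' ClockVal.zero hrun
      refine ⟨ℓ₁, hℓ₁, ?_⟩
      rwa [(hmem v).mp hvA] at hrun'
    · rintro v ⟨hvA, hvL⟩ v' ⟨hvA', hvL'⟩ hx
      obtain ⟨es', ℓ₀, hℓ₀, hrun⟩ := hvL
      obtain ⟨es'', ℓ₀', hℓ₀', hrun'⟩ := hvL'
      have h₀ : ℓ₀ = none := hℓ₀
      have h₀' : ℓ₀' = none := hℓ₀'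
      subst h₀; subst h₀'
      obtain ⟨-, hns⟩ := niv_run_init W v.1 es' ClockVal.zero hrun
      obtain ⟨-, hns'⟩ := niv_run_init W v'.1 es'' ClockVal.zero hrun'
      exact Subtype.ext (niv_inj W v.1 v'.1 hns hns'
        (((hmem v).mp hvA).trans ((hmem v').mp hvA').symm) hx)
    · rintro es ⟨ℓ₀, hℓ₀, hrun⟩
      cases wv : w.1 with
      | nil => exact absurd wv w.2
      | cons p wl =>
        obtain ⟨a, t⟩ := p
        rw [wv] at hrun
        cases es with
        | nil => exact absurd hrun (by simp [TimedAutomaton.IsRunFrom])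
        | cons e es2 =>
          obtain ⟨hE, hsrc, hlab, hsat, hrest⟩ := hrun
          obtain ⟨vl2, es2', h2, hp2, hx2⟩ := niv_run_back W wl es2 e.dst
            ((ClockVal.zero.add t).reset e.reset) hrest
          have hIe : e.src ∈ W.I := hsrc ▸ hℓ₀
          refine ⟨⟨(some ⟨e, hE⟩, t) :: vl2, by simp⟩, ⟨?_, ?_⟩, ?_⟩
          · apply (hmem _).mpr
            rw [wv]
            show (nivH W (some ⟨e, hE⟩), t) :: nivProj W vl2 = (a, t) :: wl
            rw [hp2]
            exact congrArg (· :: wl) (by simp [nivH, hlab])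
          · refine ⟨nivE1 W ⟨e, hE⟩ :: es2', none, rfl, ?_⟩
            exact ⟨Or.inl ⟨⟨e, hE⟩, hIe, rfl⟩, rfl, rfl, hsat, h2⟩
          · show e :: nivExtr W vl2 = e :: es2
            rw [hx2]
  have hval : ∀ v ∈ A ∩ (nivT W).Lang,
      valComp val (nivG W) v = val (W.runWord w.1 (nivExtr W v.1)) := by
    rintro v ⟨hvA, hvL⟩
    obtain ⟨es', ℓ₀, hℓ₀, hrun⟩ := hvL
    have h₀ : ℓ₀ = none := hℓ₀
    subst h₀
    obtain ⟨-, hns⟩ := niv_run_init W v.1 es' ClockVal.zero hrun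
    unfold valComp WTA.runWord
    rw [← (hmem v).mp hvA, niv_val W v.1 hns]
  exact (finsum_mem_eq_of_bijOn _ hbij (fun v hv => hval v hv)).symm
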